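/- For every positive integer n, the sum over j from 0 to n-1 of 1/(2j+1) times (the sum over k from 0 to j of (-1)^(n-k) * C(n,k) * C(n+k,k)) equals H_{2n} - (5/2)*H_n + H_{⌊n/2⌋}, as an identity of rational numbers. -/

import Mathlib

open Finset Nat

/-- The `n`-th harmonic number as a rational number. -/
def H (n : ℕ) : ℚ := ∑ j ∈ Finset.range n, 1 / ((j : ℚ) + 1)

/-- auxiliary: b n k = C(n,k) C(n+k,k) as a rational -/
def bq (n k : ℕ) : ℚ := (n.choose k : ℚ) * ((n + k).choose k : ℚ)

def cq (n k : ℕ) : ℚ := ((n + 1).choose k : ℚ) * ((n + k).choose k : ℚ)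

lemma bq_zero {n k : ℕ} (h : n < k) : bq n k = 0 := by
  simp [bq, Nat.choose_eq_zero_of_lt h]

lemma cq_zero {n k : ℕ} (h : n + 1 < k) : cq n k = 0 := by
  simp [cq, Nat.choose_eq_zero_of_lt h]

lemma fact_ne (m : ℕ) : ((m ! : ℚ)) ≠ 0 := by
  exact_mod_cast Nat.factorial_ne_zero m

/-- P1 -/
lemma P1 (n k : ℕ) : ((n : ℚ) + 1 - k) * bq (n + 1) k = ((n : ℚ) + k + 1) * bq n k := by
  rcases le_or_gt k n with h | h
  · obtain ⟨d, rfl⟩ := Nat.exists_eq_add_of_le h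
    unfold bq
    rw [Nat.cast_choose ℚ (show k ≤ k + d + 1 by omega),
        Nat.cast_choose ℚ (show k ≤ k + d + 1 + k by omega),
        Nat.cast_choose ℚ (show k ≤ k + d by omega),
        Nat.cast_choose ℚ (show k ≤ k + d + k by omega)]
    have e1 : k + d + 1 - k = d + 1 := by omega
    have e2 : k + d + 1 + k - k = k + d + 1 := by omega
    have e3 : k + d - k = d := by omega
    have e4 : k + d + k - k = k + d := by omega
    rw [e1, e2, e3, e4]
    have f1 : ((k + d + 1)! : ℚ) = (k + d + 1) * (k + d)! := by
      rw [show k + d + 1 = (k + d) + 1 from rfl, Nat.factorial_succ]; push_cast; ring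
    have f2 : ((k + d + 1 + k)! : ℚ) = (k + d + 1 + k) * (k + d + k)! := by
      rw [show k + d + 1 + k = (k + d + k) + 1 by omega, Nat.factorial_succ]; push_cast [show k + d + 1 + k = k + d + k + 1 by omega]; ring
    have f3 : ((d + 1)! : ℚ) = (d + 1) * d ! := by
      rw [Nat.factorial_succ]; push_cast; ring
    rw [f1, f2, f3]
    field_simp
    push_cast
    ring
  · rcases Nat.lt_or_ge (n + 1) k with h2 | h2
    · rw [bq_zero h2, bq_zero (by omega)]; ring
    · have : k = n + 1 := by omega
      subst this
      rw [bq_zero (Nat.lt_succ_self n)]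
      push_cast
      ring

/-- P3 -/
lemma P3 (m k : ℕ) : ((k : ℚ) + 1)^2 * bq m (k + 1) = ((m : ℚ) - k) * ((m : ℚ) + k + 1) * bq m k := by
  rcases Nat.lt_or_ge k m with h | h
  · obtain ⟨e, rfl⟩ := Nat.exists_eq_add_of_lt h
    unfold bq
    rw [Nat.cast_choose ℚ (show k + 1 ≤ k + e + 1 by omega),
        Nat.cast_choose ℚ (show k + 1 ≤ k + e + 1 + (k + 1) by omega),
        Nat.cast_choose ℚ (show k ≤ k + e + 1 by omega),
        Nat.cast_choose ℚ (show k ≤ k + e + 1 + k by omega)]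
    have e1 : k + e + 1 - (k + 1) = e := by omega
    have e2 : k + e + 1 + (k + 1) - (k + 1) = k + e + 1 := by omega
    have e3 : k + e + 1 - k = e + 1 := by omega
    have e4 : k + e + 1 + k - k = k + e + 1 := by omega
    rw [e1, e2, e3, e4]
    have f1 : ((k + e + 1 + (k + 1))! : ℚ) = (k + e + 1 + (k + 1)) * (k + e + 1 + k)! := by
      rw [show k + e + 1 + (k + 1) = (k + e + 1 + k) + 1 by omega, Nat.factorial_succ]
      push_cast [show k + e + 1 + (k + 1) = k + e + 1 + k + 1 by omega]; ring
    have f2 : ((k + 1)! : ℚ) = (k + 1) * k ! := by rw [Nat.factorial_succ]; push_cast; ring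
    have f3 : ((e + 1)! : ℚ) = (e + 1) * e ! := by rw [Nat.factorial_succ]; push_cast; ring
    rw [f1, f2, f3]
    field_simp
    push_cast
    ring
  · rcases Nat.lt_or_ge m k with h2 | h2
    · rw [bq_zero (by omega), bq_zero (by omega)]; ring
    · have : k = m := by omega
      subst this
      rw [bq_zero (Nat.lt_succ_self k)]
      push_cast
      ring

/-- P2 : certificate -/
lemma P2 (n k : ℕ) : ((n : ℚ) + 1)^2 * (bq (n + 1) k + bq n k) =
    2 * ((k : ℚ) + 1)^2 * cq n (k + 1) + 2 * (k : ℚ)^2 * cq n k := by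
  rcases le_or_gt k n with h | h
  · obtain ⟨d, rfl⟩ := Nat.exists_eq_add_of_le h
    unfold bq cq
    rw [Nat.cast_choose ℚ (show k ≤ k + d + 1 by omega),
        Nat.cast_choose ℚ (show k ≤ k + d + 1 + k by omega),
        Nat.cast_choose ℚ (show k ≤ k + d by omega),
        Nat.cast_choose ℚ (show k ≤ k + d + k by omega),
        Nat.cast_choose ℚ (show k + 1 ≤ k + d + 1 by omega),
        Nat.cast_choose ℚ (show k + 1 ≤ k + d + (k + 1) by omega)]
    have e1 : k + d + 1 - k = d + 1 := by omega
    have e2 : k + d + 1 + k - k = k + d + 1 := by omega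
    have e3 : k + d - k = d := by omega
    have e4 : k + d + k - k = k + d := by omega
    have e5 : k + d + 1 - (k + 1) = d := by omega
    have e6 : k + d + (k + 1) - (k + 1) = k + d := by omega
    rw [e1, e2, e3, e4, e5, e6]
    have f1 : ((k + d + 1)! : ℚ) = (k + d + 1) * (k + d)! := by
      rw [show k + d + 1 = (k + d) + 1 from rfl, Nat.factorial_succ]; push_cast; ring
    have f2 : ((k + d + 1 + k)! : ℚ) = (k + d + 1 + k) * (k + d + k)! := by
      rw [show k + d + 1 + k = (k + d + k) + 1 by omega, Nat.factorial_succ]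
      push_cast [show k + d + 1 + k = k + d + k + 1 by omega]; ring
    have f3 : ((k + d + (k + 1))! : ℚ) = (k + d + 1 + k) * (k + d + k)! := by
      rw [show k + d + (k + 1) = (k + d + k) + 1 by omega, Nat.factorial_succ]
      push_cast [show k + d + 1 + k = k + d + k + 1 by omega]; ring
    have f4 : ((d + 1)! : ℚ) = (d + 1) * d ! := by rw [Nat.factorial_succ]; push_cast; ring
    have f5 : ((k + 1)! : ℚ) = (k + 1) * k ! := by rw [Nat.factorial_succ]; push_cast; ring
    rw [f1, f2, f3, f4, f5]
    field_simp
    push_cast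
    ring
  · rcases Nat.lt_or_ge (n + 1) k with h2 | h2
    · rw [bq_zero (by omega), bq_zero (by omega), cq_zero (by omega), cq_zero (by omega)]
      ring
    · have hk : k = n + 1 := by omega
      subst hk
      rw [bq_zero (Nat.lt_succ_self n), cq_zero (Nat.lt_succ_self (n + 1))]
      have h1 := Nat.choose_succ_succ (n + (n + 1)) n
      simp only [Nat.succ_eq_add_one] at h1
      have h2 : (n + (n + 1)).choose n = (n + (n + 1)).choose (n + 1) :=
        Nat.choose_symm_of_eq_add (by omega)
      have key : ((n + 1) + (n + 1)).choose (n + 1) = 2 * ((n + (n + 1)).choose (n + 1)) := by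
        rw [show (n + 1) + (n + 1) = (n + (n + 1)) + 1 by omega]
        omega
      unfold bq cq
      rw [key]
      push_cast
      ring

/-- L1b : three-term (Legendre) recurrence at shifted index -/
lemma L1b (n k : ℕ) : ((n : ℚ) + 2) * bq (n + 2) (k + 1) + ((n : ℚ) + 1) * bq n (k + 1) =
    (2 * (n : ℚ) + 3) * bq (n + 1) (k + 1) + 2 * (2 * (n : ℚ) + 3) * bq (n + 1) k := by
  rcases le_or_gt k n with h | h
  · have h1 := P1 (n + 1) (k + 1)
    have h2 := P1 n (k + 1)
    have h3 := P3 (n + 1) k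
    simp only [show n + 1 + 1 = n + 2 from rfl] at h1
    push_cast at h1 h2 h3
    have hu : ((n : ℚ) + 1 - k) ≠ 0 := by
      have : (k : ℚ) ≤ n := by exact_mod_cast h
      intro hc; nlinarith
    have hv : ((n : ℚ) + k + 2) ≠ 0 := by positivity
    apply mul_left_cancel₀ (mul_ne_zero hu hv)
    linear_combination (((n : ℚ) + k + 2) * ((n : ℚ) + 2)) * h1
      - (((n : ℚ) + 1 - k) * ((n : ℚ) + 1)) * h2 + (2 * (2 * (n : ℚ) + 3)) * h3
  · rcases Nat.lt_or_ge (n + 1) k with h2 | h2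
    · rw [bq_zero (by omega), bq_zero (by omega), bq_zero (by omega), bq_zero (by omega)]
      ring
    · have hk : k = n + 1 := by omega
      subst hk
      have z1 : bq n (n + 1 + 1) = 0 := bq_zero (by omega)
      have z2 : bq (n + 1) (n + 1 + 1) = 0 := bq_zero (by omega)
      rw [z1, z2]
      have key := Nat.succ_mul_centralBinom_succ (n + 1)
      unfold Nat.centralBinom at key
      have cast_key : ((n : ℚ) + 2) * ((2 * (n + 2)).choose (n + 2) : ℚ)
          = 2 * (2 * (n : ℚ) + 3) * ((2 * (n + 1)).choose (n + 1) : ℚ) := by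
        exact_mod_cast congrArg (Nat.cast (R := ℚ)) key
      unfold bq
      rw [show n + 2 + (n + 1 + 1) = 2 * (n + 2) by ring,
          show n + 1 + (n + 1) = 2 * (n + 1) by ring,
          show (n + 2).choose (n + 1 + 1) = 1 from Nat.choose_self _,
          Nat.choose_self]
      push_cast
      push_cast at cast_key
      linarith [cast_key]

/-- L2 : alternating sum -/
lemma L2 (n : ℕ) : ∑ k ∈ range (n + 1), (-1 : ℚ)^k * bq n k = (-1)^n := by
  induction n with
  | zero => simp [bq]
  | succ n ih =>
    set f : ℕ → ℚ := fun k => (-1 : ℚ)^(k+1) * 2 * (k : ℚ)^2 * cq n k with hf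
    have key : ∑ k ∈ range (n + 2), (-1 : ℚ)^k * (((n : ℚ) + 1)^2 * (bq (n + 1) k + bq n k))
        = f (n + 2) - f 0 := by
      rw [← Finset.sum_range_sub f (n + 2)]
      apply Finset.sum_congr rfl
      intro k _
      have h2 := P2 n k
      simp only [hf]
      push_cast
      linear_combination (-1 : ℚ)^k * h2
    have hf0 : f 0 = 0 := by simp [hf]
    have hfn : f (n + 2) = 0 := by
      simp [hf, cq_zero (show n + 1 < n + 2 by omega)]
    have pad : ∑ k ∈ range (n + 2), (-1 : ℚ)^k * bq n k = (-1)^n := by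
      rw [Finset.sum_range_succ, bq_zero (Nat.lt_succ_self n)]
      simpa using ih
    have expand : ∑ k ∈ range (n + 2), (-1 : ℚ)^k * (((n : ℚ) + 1)^2 * (bq (n + 1) k + bq n k))
        = ((n : ℚ) + 1)^2 * ((∑ k ∈ range (n + 2), (-1 : ℚ)^k * bq (n + 1) k)
          + ∑ k ∈ range (n + 2), (-1 : ℚ)^k * bq n k) := by
      rw [mul_add, Finset.mul_sum, Finset.mul_sum, ← Finset.sum_add_distrib]
      apply Finset.sum_congr rfl
      intro k _
      ring
    rw [expand, pad, hf0, hfn] at key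
    have hne : ((n : ℚ) + 1)^2 ≠ 0 := by positivity
    have := mul_eq_zero.mp (by linarith [key] : ((n : ℚ) + 1)^2 *
      ((∑ k ∈ range (n + 2), (-1 : ℚ)^k * bq (n + 1) k) + (-1)^n) = 0)
    rcases this with hc | hc
    · exact absurd hc hne
    · have : ∑ k ∈ range (n + 2), (-1 : ℚ)^k * bq (n + 1) k = -(-1)^n := by linarith
      rw [this]; ring

/-- L3 : alternating sum with odd denominators -/
lemma L3 (n : ℕ) : ∑ k ∈ range (n + 1), (-1 : ℚ)^k * bq n k / (2 * k + 1) = 1 / (2 * (n : ℚ) + 1) := by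
  induction n with
  | zero => simp [bq]
  | succ n ih =>
    have pointwise : ∀ k : ℕ, (2 * (n : ℚ) + 3) * ((-1 : ℚ)^k * bq (n + 1) k / (2 * k + 1))
        - (2 * (n : ℚ) + 1) * ((-1 : ℚ)^k * bq n k / (2 * k + 1))
        = (-1 : ℚ)^k * bq (n + 1) k + (-1 : ℚ)^k * bq n k := by
      intro k
      have h1 := P1 n k
      have hk : (2 * (k : ℚ) + 1) ≠ 0 := by positivity
      field_simp
      linear_combination 2 * h1
    have key : (2 * (n : ℚ) + 3) * (∑ k ∈ range (n + 2), (-1 : ℚ)^k * bq (n + 1) k / (2 * k + 1))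
        - (2 * (n : ℚ) + 1) * (∑ k ∈ range (n + 2), (-1 : ℚ)^k * bq n k / (2 * k + 1))
        = (∑ k ∈ range (n + 2), (-1 : ℚ)^k * bq (n + 1) k)
          + ∑ k ∈ range (n + 2), (-1 : ℚ)^k * bq n k := by
      rw [Finset.mul_sum, Finset.mul_sum, ← Finset.sum_sub_distrib, ← Finset.sum_add_distrib]
      exact Finset.sum_congr rfl fun k _ => pointwise k
    have padF : ∑ k ∈ range (n + 2), (-1 : ℚ)^k * bq n k / (2 * k + 1) = 1 / (2 * (n : ℚ) + 1) := by
      rw [Finset.sum_range_succ, bq_zero (Nat.lt_succ_self n)]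
      simpa using ih
    have padS : ∑ k ∈ range (n + 2), (-1 : ℚ)^k * bq n k = (-1)^n := by
      rw [Finset.sum_range_succ, bq_zero (Nat.lt_succ_self n)]
      simpa using L2 n
    rw [padF, padS, L2 (n + 1)] at key
    have h1 : (2 * (n : ℚ) + 1) ≠ 0 := by positivity
    have h3 : (2 * (n : ℚ) + 3) ≠ 0 := by positivity
    have keyr : (2 * (n : ℚ) + 3) * (∑ k ∈ range (n + 2), (-1 : ℚ)^k * bq (n + 1) k / (2 * k + 1)) = 1 := by
      rw [show ((-1 : ℚ)^(n+1) + (-1 : ℚ)^n) = 0 by ring] at key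
      field_simp at key
      linarith
    push_cast
    rw [show 2 * ((n : ℚ) + 1) + 1 = 2 * (n : ℚ) + 3 by ring]
    field_simp at keyr ⊢
    linarith

def O (n : ℕ) : ℚ := ∑ j ∈ range n, 1 / (2 * (j : ℚ) + 1)

lemma O_succ (n : ℕ) : O (n + 1) = O n + 1 / (2 * (n : ℚ) + 1) := by
  simp [O, Finset.sum_range_succ]

lemma H_succ (n : ℕ) : H (n + 1) = H n + 1 / ((n : ℚ) + 1) := by
  simp [H, Finset.sum_range_succ]

lemma O_eq (n : ℕ) : O n = H (2 * n) - H n / 2 := by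
  induction n with
  | zero => simp [O, H]
  | succ n ih =>
    have h2 : 2 * (n + 1) = (2 * n + 1) + 1 := by ring
    rw [O_succ, ih, h2, H_succ, H_succ, H_succ]
    push_cast
    have h1 : (2 * (n : ℚ) + 1) ≠ 0 := by positivity
    have h2 : (2 * (n : ℚ) + 2) ≠ 0 := by positivity
    have h3 : ((n : ℚ) + 1) ≠ 0 := by positivity
    field_simp
    ring

def M (n : ℕ) : ℚ := 2 * H n - H (n / 2)

def Vp (n : ℕ) : ℚ := ∑ k ∈ range (n + 1), (-1 : ℚ)^k * bq n k * O k

/-- recurrence for Vp -/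
lemma Vrec (n : ℕ) : ((n : ℚ) + 2) * Vp (n + 2) + ((n : ℚ) + 1) * Vp n
    = -(2 * (n : ℚ) + 3) * Vp (n + 1) - 2 := by
  -- pad all three to range (n+3)
  have pad0 : ∑ k ∈ range (n + 3), (-1 : ℚ)^k * bq n k * O k = Vp n := by
    unfold Vp
    rw [Finset.sum_range_succ, Finset.sum_range_succ, bq_zero (show n < n + 1 by omega),
      bq_zero (show n < n + 2 by omega)]
    ring
  have pad1 : ∑ k ∈ range (n + 3), (-1 : ℚ)^k * bq (n + 1) k * O k = Vp (n + 1) := by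
    unfold Vp
    rw [Finset.sum_range_succ, bq_zero (show n + 1 < n + 2 by omega)]
    ring
  -- LHS as one sum over range (n+3), then strip k = 0 (O 0 = 0)
  have hL : ((n : ℚ) + 2) * Vp (n + 2) + ((n : ℚ) + 1) * Vp n
      = ∑ k ∈ range (n + 2),
          (-1 : ℚ)^(k+1) * (((n : ℚ) + 2) * bq (n + 2) (k + 1) + ((n : ℚ) + 1) * bq n (k + 1)) * O (k + 1) := by
    rw [← pad0]
    unfold Vp
    rw [Finset.mul_sum, Finset.mul_sum, ← Finset.sum_add_distrib]
    rw [Finset.sum_range_succ' (fun k => ((n : ℚ) + 2) * ((-1 : ℚ)^k * bq (n + 2) k * O k)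
        + ((n : ℚ) + 1) * ((-1 : ℚ)^k * bq n k * O k)) (n + 2)]
    simp [O]
    apply Finset.sum_congr rfl
    intro k _
    push_cast
    ring
  rw [hL]
  -- apply L1b pointwise and split
  have hsplit : ∀ k : ℕ, (-1 : ℚ)^(k+1) * (((n : ℚ) + 2) * bq (n + 2) (k + 1) + ((n : ℚ) + 1) * bq n (k + 1)) * O (k + 1)
      = (2 * (n : ℚ) + 3) * ((-1 : ℚ)^(k+1) * bq (n + 1) (k + 1) * O (k + 1))
        - 2 * (2 * (n : ℚ) + 3) * ((-1 : ℚ)^k * bq (n + 1) k * O k)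
        - 2 * (2 * (n : ℚ) + 3) * ((-1 : ℚ)^k * bq (n + 1) k / (2 * k + 1)) := by
    intro k
    have h := L1b n k
    rw [O_succ]
    linear_combination ((-1 : ℚ)^(k+1) * (O k + 1 / (2 * (k : ℚ) + 1))) * h
  rw [Finset.sum_congr rfl fun k _ => hsplit k]
  rw [Finset.sum_sub_distrib, Finset.sum_sub_distrib, ← Finset.mul_sum, ← Finset.mul_sum, ← Finset.mul_sum]
  -- first sum: shift back
  have hshift : ∑ k ∈ range (n + 2), (-1 : ℚ)^(k+1) * bq (n + 1) (k + 1) * O (k + 1) = Vp (n + 1) := by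
    rw [← pad1]
    rw [Finset.sum_range_succ' (fun k => (-1 : ℚ)^k * bq (n + 1) k * O k) (n + 2)]
    simp [O]
  have hmid : ∑ k ∈ range (n + 2), (-1 : ℚ)^k * bq (n + 1) k * O k = Vp (n + 1) := rfl
  have hF : ∑ k ∈ range (n + 2), (-1 : ℚ)^k * bq (n + 1) k / (2 * (k : ℚ) + 1) = 1 / (2 * (n : ℚ) + 3) := by
    have := L3 (n + 1)
    push_cast at this
    rw [this]
    rw [show 2 * ((n : ℚ) + 1) + 1 = 2 * (n : ℚ) + 3 by ring]
  rw [hshift, hmid, hF]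
  have h3 : (2 * (n : ℚ) + 3) ≠ 0 := by positivity
  field_simp
  ring

/-- recurrence for M -/
lemma Mrec (n : ℕ) : ((n : ℚ) + 2) * M (n + 2) + ((n : ℚ) + 1) * M n
    = (2 * (n : ℚ) + 3) * M (n + 1) - 2 * (-1 : ℚ)^n := by
  rcases Nat.even_or_odd n with ⟨m, rfl⟩ | ⟨m, rfl⟩
  · have d0 : (m + m) / 2 = m := by omega
    have d1 : (m + m + 1) / 2 = m := by omega
    have d2 : (m + m + 2) / 2 = m + 1 := by omega
    have hsgn : (-1 : ℚ)^(m + m) = 1 := by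
      rw [show m + m = 2 * m by ring, pow_mul]; norm_num
    have hA := H_succ (m + m)
    have hB := H_succ (m + m + 1)
    have hC := H_succ m
    unfold M
    rw [d0, d1, d2, hsgn, show m + m + 2 = (m + m + 1) + 1 from rfl, hB, hA, hC]
    push_cast at *
    have h1 : ((m : ℚ) + m + 1) ≠ 0 := by positivity
    have h2 : ((m : ℚ) + m + 1 + 1) ≠ 0 := by positivity
    have h3 : ((m : ℚ) + 1) ≠ 0 := by positivity
    field_simp
    ring
  · have d0 : (2 * m + 1) / 2 = m := by omega
    have d1 : (2 * m + 1 + 1) / 2 = m + 1 := by omega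
    have d2 : (2 * m + 1 + 2) / 2 = m + 1 := by omega
    have hsgn : (-1 : ℚ)^(2 * m + 1) = -1 := by
      rw [pow_succ, pow_mul]; norm_num
    have hA := H_succ (2 * m + 1)
    have hB := H_succ (2 * m + 1 + 1)
    have hC := H_succ m
    unfold M
    rw [d0, d1, d2, hsgn, show 2 * m + 1 + 2 = (2 * m + 1 + 1) + 1 from rfl, hB, hA, hC]
    push_cast at *
    have h1 : (2 * (m : ℚ) + 2) ≠ 0 := by positivity
    have h2 : (2 * (m : ℚ) + 3) ≠ 0 := by positivity
    have h3 : ((m : ℚ) + 1) ≠ 0 := by positivity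
    field_simp
    ring

lemma VeqM : ∀ n : ℕ, Vp n = (-1 : ℚ)^n * M n := by
  have base0 : Vp 0 = (-1 : ℚ)^0 * M 0 := by
    simp [Vp, M, bq, O, H]
  have base1 : Vp 1 = (-1 : ℚ)^1 * M 1 := by
    have hv : Vp 1 = -2 := by
      simp [Vp, Finset.sum_range_succ, bq, O, H]
    have hm : M 1 = 2 := by
      simp [M, H]
    rw [hv, hm]
    norm_num
  have step : ∀ n : ℕ, Vp n = (-1 : ℚ)^n * M n → Vp (n + 1) = (-1 : ℚ)^(n + 1) * M (n + 1)
      → Vp (n + 2) = (-1 : ℚ)^(n + 2) * M (n + 2) := by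
    intro n h0 h1
    have hv := Vrec n
    have hm := Mrec n
    have hne : ((n : ℚ) + 2) ≠ 0 := by positivity
    apply mul_left_cancel₀ hne
    rw [h0, h1] at hv
    have e1 : (-1 : ℚ)^(n + 1) = -(-1 : ℚ)^n := by ring
    have e2 : (-1 : ℚ)^(n + 2) = (-1 : ℚ)^n := by ring
    rw [e1] at hv
    rw [e2]
    have sq : (-1 : ℚ)^n * (-1 : ℚ)^n = 1 := by
      rw [← pow_add, ← two_mul, pow_mul]; norm_num
    linear_combination hv - (-1 : ℚ)^n * hm + 2 * sq
  intro n
  induction n using Nat.twoStepInduction with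
  | zero => exact base0
  | one => exact base1
  | more n ih1 ih2 => exact step n ih1 ih2

lemma swap_sum (a t : ℕ → ℚ) (n : ℕ) :
    ∑ j ∈ range n, a j * ∑ k ∈ range (j + 1), t k
      = ∑ k ∈ range n, t k * ((∑ j ∈ range n, a j) - ∑ j ∈ range k, a j) := by
  induction n with
  | zero => simp
  | succ n ih =>
    have hA : ∑ j ∈ range (n + 1), a j = (∑ j ∈ range n, a j) + a n := Finset.sum_range_succ a n
    have hT : ∑ k ∈ range (n + 1), t k = (∑ k ∈ range n, t k) + t n := Finset.sum_range_succ t n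
    rw [Finset.sum_range_succ _ n, ih, hT]
    conv_rhs => rw [Finset.sum_range_succ _ n]
    rw [hA]
    have hmain : ∑ k ∈ range n, t k * ((∑ j ∈ range n, a j) + a n - ∑ j ∈ range k, a j)
        = (∑ k ∈ range n, t k * ((∑ j ∈ range n, a j) - ∑ j ∈ range k, a j))
          + (∑ k ∈ range n, t k) * a n := by
      rw [Finset.sum_mul, ← Finset.sum_add_distrib]
      exact Finset.sum_congr rfl fun k _ => by ring
    rw [hmain]
    ring

theorem stmt_4 (n : ℕ) (hn : 0 < n) :
    ∑ j ∈ Finset.range n, (1 / (2 * (j : ℚ) + 1)) *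
        ∑ k ∈ Finset.range (j + 1),
          (-1 : ℚ)^(n - k) * (n.choose k) * ((n + k).choose k) =
      H (2 * n) - (5 / 2) * H n + H (n / 2) := by
  have hinner : ∀ j ∈ range n, (1 / (2 * (j : ℚ) + 1)) *
        ∑ k ∈ Finset.range (j + 1), (-1 : ℚ)^(n - k) * (n.choose k) * ((n + k).choose k)
      = (-1 : ℚ)^n * ((1 / (2 * (j : ℚ) + 1)) * ∑ k ∈ range (j + 1), (-1 : ℚ)^k * bq n k) := by
    intro j hj
    have hjn : j < n := Finset.mem_range.mp hj
    have hin : ∑ k ∈ Finset.range (j + 1), (-1 : ℚ)^(n - k) * (n.choose k) * ((n + k).choose k)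
        = ∑ k ∈ range (j + 1), (-1 : ℚ)^n * ((-1 : ℚ)^k * bq n k) := by
      apply Finset.sum_congr rfl
      intro k hk
      have hkn : k ≤ n := by
        have := Finset.mem_range.mp hk; omega
      have hnk : n - k + k = n := Nat.sub_add_cancel hkn
      have hsgn : (-1 : ℚ)^(n - k) = (-1 : ℚ)^n * (-1 : ℚ)^k := by
        calc (-1 : ℚ)^(n - k) = (-1 : ℚ)^(n - k) * ((-1 : ℚ)^k * (-1 : ℚ)^k) := by
              rw [← pow_add, ← two_mul, pow_mul]; norm_num
          _ = ((-1 : ℚ)^(n - k) * (-1 : ℚ)^k) * (-1 : ℚ)^k := by ring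
          _ = (-1 : ℚ)^n * (-1 : ℚ)^k := by rw [← pow_add, hnk]
      rw [hsgn]
      unfold bq
      ring
    rw [hin, ← Finset.mul_sum]
    ring
  rw [Finset.sum_congr rfl hinner, ← Finset.mul_sum]
  have hs : (∑ j ∈ range n, (1 / (2 * (j : ℚ) + 1)) * ∑ k ∈ range (j + 1), (-1 : ℚ)^k * bq n k)
      = ∑ k ∈ range n, ((-1 : ℚ)^k * bq n k) *
          ((∑ j ∈ range n, 1 / (2 * (j : ℚ) + 1)) - ∑ j ∈ range k, 1 / (2 * (j : ℚ) + 1)) :=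
    swap_sum _ _ n
  rw [hs]
  have hO : ∀ m : ℕ, (∑ j ∈ range m, 1 / (2 * (j : ℚ) + 1)) = O m := fun m => rfl
  have hsum2 : ∑ k ∈ range n, ((-1 : ℚ)^k * bq n k) * (O n - O k)
      = ∑ k ∈ range (n + 1), ((-1 : ℚ)^k * bq n k) * (O n - O k) := by
    rw [Finset.sum_range_succ]
    simp
  simp only [hO]
  rw [hsum2]
  have hsplit : ∑ k ∈ range (n + 1), ((-1 : ℚ)^k * bq n k) * (O n - O k)
      = (∑ k ∈ range (n + 1), (-1 : ℚ)^k * bq n k) * O n - Vp n := by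
    unfold Vp
    rw [Finset.sum_mul, ← Finset.sum_sub_distrib]
    exact Finset.sum_congr rfl fun k _ => by ring
  rw [hsplit, L2 n]
  have hVM := VeqM n
  rw [hVM]
  have sq : (-1 : ℚ)^n * (-1 : ℚ)^n = 1 := by
    rw [← pow_add, ← two_mul, pow_mul]; norm_num
  have hfin : (-1 : ℚ)^n * ((-1 : ℚ)^n * O n - (-1 : ℚ)^n * M n) = O n - M n := by
    linear_combination (O n - M n) * sq
  rw [hfin, O_eq n]
  unfold M
  ring
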